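/- In Strebel's chimney domain C: mod Γᵋ_{I₀,J₀} → ∞ as ε → 0⁺, where I₀ = {1+iy : y > 1} and J₀ = (1,2). -/

import Mathlib

open MeasureTheory Set

noncomputable section

/-- A continuous, piecewise continuously differentiable curve parametrized by `[0,1]`. -/
structure PCurve where
  toFun : ℝ → ℂ
  continuousOn : ContinuousOn toFun (Set.Icc 0 1)
  exceptional : Finset ℝ
  differentiableAt : ∀ t ∈ Set.Icc (0:ℝ) 1 \ (exceptional : Set ℝ), DifferentiableAt ℝ toFun t
  derivContinuousOn : ContinuousOn (deriv toFun) (Set.Icc (0:ℝ) 1 \ (exceptional : Set ℝ))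

/-- The line integral `∫_γ ρ |dz|` of a nonnegative Borel function along a curve. -/
def curveLIntegral (ρ : ℂ → ENNReal) (γ : PCurve) : ENNReal :=
  ∫⁻ t in Set.Ioo (0:ℝ) 1, ρ (γ.toFun t) * ENNReal.ofReal ‖deriv γ.toFun t‖

/-- `ρ` is admissible for the curve family `Γ`. -/
def IsAdmissible (ρ : ℂ → ENNReal) (Γ : Set PCurve) : Prop :=
  Measurable ρ ∧ ∀ γ ∈ Γ, 1 ≤ curveLIntegral ρ γ

/-- The conformal modulus of a family of curves. -/
def modulus (Γ : Set PCurve) : ENNReal :=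
  ⨅ (ρ : ℂ → ENNReal) (_ : IsAdmissible ρ Γ), ∫⁻ z : ℂ, ρ z ^ 2

/-- The family `(E, F; Ω)` of curves with interior in `Ω`, one endpoint in `E` and
the other endpoint in `F`. -/
def connecting (E F Ω : Set ℂ) : Set PCurve :=
  {γ | (∀ t ∈ Set.Ioo (0:ℝ) 1, γ.toFun t ∈ Ω) ∧
    ((γ.toFun 0 ∈ E ∧ γ.toFun 1 ∈ F) ∨ (γ.toFun 0 ∈ F ∧ γ.toFun 1 ∈ E))}

/-- A continuum: a compact connected set with more than one point. -/
def IsContinuum (E : Set ℂ) : Prop :=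
  IsCompact E ∧ IsConnected E ∧ E.Nontrivial

/-- The distance between two sets. -/
def setDist (E F : Set ℂ) : ℝ :=
  sInf (Set.image2 dist E F)

/-- The relative distance `Δ(E,F) = dist(E,F) / min(diam E, diam F)`. -/
def relDist (E F : Set ℂ) : ℝ :=
  setDist E F / min (Metric.diam E) (Metric.diam F)

/-- Strebel's chimney domain `C = {Im z < 0} ∪ {|Re z| < 1}`. -/
def chimney : Set ℂ := {z | z.im < 0} ∪ {z | |z.re| < 1}

/-- The vertical shrinking map `T_ε(x + iy) = x + iεy`. -/
def Teps (ε : ℝ) (z : ℂ) : ℂ := ⟨z.re, ε * z.im⟩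

/-- `Γᵋ_{I,J} = (T_ε(I), T_ε(J); C)`. -/
def chimFam (ε : ℝ) (I J : Set ℂ) : Set PCurve :=
  connecting (Teps ε '' I) (Teps ε '' J) chimney

/-- The right boundary component `C₊ = [1,∞) ∪ {1 + iy : y ≥ 0}` of `∂C`. -/
def Cplus : Set ℂ := {z | (z.im = 0 ∧ 1 ≤ z.re) ∨ (z.re = 1 ∧ 0 ≤ z.im)}

/-- The left boundary component `C₋ = (-∞,-1] ∪ {-1 + iy : y ≥ 0}` of `∂C`. -/
def Cminus : Set ℂ := {z | (z.im = 0 ∧ z.re ≤ -1) ∨ (z.re = -1 ∧ 0 ≤ z.im)}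

/-- `I₀ = {1 + iy : y > 1}`. -/
def chimI0 : Set ℂ := {z | z.re = 1 ∧ 1 < z.im}

/-- `J₀ = (1,2) ⊂ ℝ`. -/
def chimJ0 : Set ℂ := {z | z.im = 0 ∧ 1 < z.re ∧ z.re < 2}

/-- Arclength parametrization of `C₊`: `t ≤ 0 ↦ 1 - t ∈ [1,∞)`, `t ≥ 0 ↦ 1 + it`. -/
def gPlus (t : ℝ) : ℂ := if t ≤ 0 then ⟨1 - t, 0⟩ else ⟨1, t⟩

/-- Arclength parametrization of `C₋`: `t ≤ 0 ↦ -1 + t ∈ (-∞,-1]`, `t ≥ 0 ↦ -1 + it`. -/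
def gMinus (t : ℝ) : ℂ := if t ≤ 0 then ⟨-1 + t, 0⟩ else ⟨-1, t⟩

/-- An arc of prime ends of `∂C`: a connected arc of the prime-end circle of the chimney
domain.  It is either an arc inside one boundary component, or an arc passing through the
top end of the chimney, or an arc passing through the bottom end (the point at infinity of
the lower half-plane), or an arc passing through both ends. -/
def IsChimneyArc (A : Set ℂ) : Prop :=
  (∃ s : Set ℝ, s.OrdConnected ∧ A = gPlus '' s) ∨
  (∃ s : Set ℝ, s.OrdConnected ∧ A = gMinus '' s) ∨
  (∃ s t : Set ℝ, s.OrdConnected ∧ t.OrdConnected ∧ ¬BddAbove s ∧ ¬BddAbove t ∧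
    A = gPlus '' s ∪ gMinus '' t) ∨
  (∃ s t : Set ℝ, s.OrdConnected ∧ t.OrdConnected ∧ ¬BddBelow s ∧ ¬BddBelow t ∧
    A = gPlus '' s ∪ gMinus '' t) ∨
  (∃ a b a' b' : ℝ,
    A = gPlus '' (Set.Iio a ∪ Set.Ioi b) ∪ gMinus '' (Set.Iio a' ∪ Set.Ioi b'))

/-- `A` contains the top end of the chimney:
`{1 + iy : y > a} ∪ {-1 + iy : y > a} ⊆ A` for some `a > 0`. -/
def ContainsTopEnd (A : Set ℂ) : Prop :=
  ∃ a : ℝ, 0 < a ∧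
    {z : ℂ | z.re = 1 ∧ a < z.im} ∪ {z : ℂ | z.re = -1 ∧ a < z.im} ⊆ A

/-- `A` contains a two-sided neighborhood of the corner `1`:
`{1 + iy : 0 < y < δ} ∪ (1, 1 + δ) ⊆ A` for some `δ > 0`. -/
def CornerNbhdPlus (A : Set ℂ) : Prop :=
  ∃ δ : ℝ, 0 < δ ∧
    ({z : ℂ | z.re = 1 ∧ 0 < z.im ∧ z.im < δ} ∪
      {z : ℂ | z.im = 0 ∧ 1 < z.re ∧ z.re < 1 + δ}) ⊆ A

/-- `A` contains a two-sided neighborhood of the corner `-1`: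
`(-1 - δ, -1) ∪ {-1 + iy : 0 < y < δ} ⊆ A` for some `δ > 0`. -/
def CornerNbhdMinus (A : Set ℂ) : Prop :=
  ∃ δ : ℝ, 0 < δ ∧
    ({z : ℂ | z.im = 0 ∧ -1 - δ < z.re ∧ z.re < -1} ∪
      {z : ℂ | z.re = -1 ∧ 0 < z.im ∧ z.im < δ}) ⊆ A



namespace ChimAux
open Real Filter

open Real Filter

def th (s : ℝ) : ℝ := π / 2 + 3 * π / 2 * s

def gam (r : ℝ) (s : ℝ) : ℂ := 1 + (r : ℂ) * Complex.exp (((th s : ℝ) : ℂ) * Complex.I)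

lemma gam_re (r s : ℝ) : (gam r s).re = 1 + r * Real.cos (th s) := by
  simp [gam, Complex.exp_ofReal_mul_I_re, Complex.exp_ofReal_mul_I_im]

lemma gam_im (r s : ℝ) : (gam r s).im = r * Real.sin (th s) := by
  simp [gam, Complex.exp_ofReal_mul_I_re, Complex.exp_ofReal_mul_I_im]

lemma gam_hasDerivAt (r s : ℝ) :
    HasDerivAt (gam r)
      ((r : ℂ) * (Complex.exp (((th s : ℝ) : ℂ) * Complex.I) * (((3 * π / 2 : ℝ) : ℂ) * Complex.I))) s := by
  have h1 : HasDerivAt (fun u : ℝ => (u : ℂ)) 1 s := by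
    simpa using (hasDerivAt_id s).ofReal_comp
  have h2 : HasDerivAt (fun u : ℝ => ((th u : ℝ) : ℂ) * Complex.I)
      (((3 * π / 2 : ℝ) : ℂ) * Complex.I) s := by
    have h3 := ((h1.const_mul (((3 * π / 2 : ℝ) : ℂ))).const_add (((π / 2 : ℝ) : ℂ))).mul_const Complex.I
    have heq : (fun u : ℝ => ((th u : ℝ) : ℂ) * Complex.I) =
        fun u : ℝ => (((π / 2 : ℝ) : ℂ) + ((3 * π / 2 : ℝ) : ℂ) * (u : ℂ)) * Complex.I := by
      funext u; push_cast [th]; ring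
    rw [heq]
    simpa using h3
  have h4 := h2.cexp
  have h5 := (h4.const_mul ((r : ℂ))).const_add 1
  exact h5

lemma gam_continuous (r : ℝ) : Continuous (gam r) := by
  unfold gam th
  continuity

lemma norm_deriv_gam {r : ℝ} (hr : 0 ≤ r) (s : ℝ) :
    ‖deriv (gam r) s‖ = 3 * π / 2 * r := by
  rw [(gam_hasDerivAt r s).deriv]
  have : ((((th s : ℝ) : ℂ)) * Complex.I).re = 0 := by simp
  rw [norm_mul, norm_mul, norm_mul]
  simp [Complex.norm_exp, this, Complex.norm_real, Real.norm_eq_abs,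
    abs_of_nonneg hr, abs_of_nonneg pi_nonneg]
  ring


def gamCurve (r : ℝ) : PCurve where
  toFun := gam r
  continuousOn := (gam_continuous r).continuousOn
  exceptional := ∅
  differentiableAt := fun t _ => (gam_hasDerivAt r t).differentiableAt
  derivContinuousOn := by
    have h : deriv (gam r) = fun s =>
        (r : ℂ) * (Complex.exp (((th s : ℝ) : ℂ) * Complex.I) * (((3 * π / 2 : ℝ) : ℂ) * Complex.I)) :=
      funext fun s => (gam_hasDerivAt r s).deriv
    rw [h]
    apply Continuous.continuousOn
    unfold th
    continuity

lemma th_lt (s : ℝ) (hs : s ∈ Ioo (0:ℝ) 1) : π / 2 < th s ∧ th s < 2 * π := by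
  unfold th
  constructor
  · nlinarith [pi_pos, hs.1]
  · nlinarith [pi_pos, hs.2]

lemma gamCurve_mem {ε r : ℝ} (hε : 0 < ε) (hr : r ∈ Ioo ε 1) :
    gamCurve r ∈ chimFam ε chimI0 chimJ0 := by
  have hrpos : 0 < r := hε.trans hr.1
  constructor
  · intro s hs
    have hθ := th_lt s hs
    show gam r s ∈ chimney
    by_cases hc : th s < π + π / 2
    · right
      simp only [mem_setOf_eq, gam_re]
      have hcos : Real.cos (th s) < 0 := Real.cos_neg_of_pi_div_two_lt_of_lt hθ.1 hc
      have hcos' : -1 ≤ Real.cos (th s) := Real.neg_one_le_cos (th s)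
      rw [abs_lt]
      constructor <;> nlinarith [hr.2]
    · left
      simp only [mem_setOf_eq, gam_im]
      have h1 : th s - 2 * π < 0 := by linarith [hθ.2]
      have h2 : -π < th s - 2 * π := by
        push_neg at hc
        nlinarith [pi_pos]
      have hsin : Real.sin (th s) < 0 := by
        have := Real.sin_neg_of_neg_of_neg_pi_lt h1 h2
        rwa [Real.sin_sub_two_pi] at this
      exact mul_neg_of_pos_of_neg hrpos hsin
  · left
    constructor
    · -- gam r 0 = 1 + i r ∈ Teps ε '' chimI0
      refine ⟨⟨1, r / ε⟩, ⟨rfl, ?_⟩, ?_⟩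
      · show (1:ℝ) < r / ε
        rw [lt_div_iff₀ hε]
        simpa using hr.1
      · show Teps ε ⟨1, r / ε⟩ = (gamCurve r).toFun 0
        have h0 : th 0 = π / 2 := by simp [th]
        apply Complex.ext
        · simp [Teps, gamCurve, gam_re, h0, Real.cos_pi_div_two]
        · show ε * (r / ε) = (gam r 0).im
          rw [gam_im, h0, Real.sin_pi_div_two]
          field_simp
    · -- gam r 1 = 1 + r ∈ Teps ε '' chimJ0
      refine ⟨⟨1 + r, 0⟩, ⟨rfl, ?_, ?_⟩, ?_⟩
      · show (1:ℝ) < 1 + r; linarith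
      · show (1:ℝ) + r < 2; linarith [hr.2]
      · show Teps ε ⟨1 + r, 0⟩ = (gamCurve r).toFun 1
        have h1 : th 1 = 2 * π := by unfold th; ring
        apply Complex.ext
        · simp [Teps, gamCurve, gam_re, h1, Real.cos_two_pi]
        · simp [Teps, gamCurve, gam_im, h1, Real.sin_two_pi]

lemma curve_bound {ε r : ℝ} {ρ : ℂ → ENNReal}
    (hadm : IsAdmissible ρ (chimFam ε chimI0 chimJ0))
    (hε : 0 < ε) (hr : r ∈ Ioo ε 1) :
    (ENNReal.ofReal (3 * π / 2 * r))⁻¹ ≤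
      ENNReal.ofReal (3 * π / 2 * r) * ∫⁻ s in Ioo (0:ℝ) 1, ρ (gam r s) ^ 2 := by
  have hrpos : 0 < r := hε.trans hr.1
  set c : ENNReal := ENNReal.ofReal (3 * π / 2 * r) with hc
  have hcpos : 0 < 3 * π / 2 * r := by positivity
  have hc0 : c ≠ 0 := by
    simp only [hc, ne_eq, ENNReal.ofReal_eq_zero, not_le]; exact hcpos
  have hctop : c ≠ ⊤ := ENNReal.ofReal_ne_top
  set A : ENNReal := ∫⁻ s in Ioo (0:ℝ) 1, ρ (gam r s) with hA
  set B : ENNReal := ∫⁻ s in Ioo (0:ℝ) 1, ρ (gam r s) ^ 2 with hB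
  -- admissibility
  have h1 : 1 ≤ A * c := by
    have h2 := hadm.2 (gamCurve r) (gamCurve_mem hε hr)
    have h3 : curveLIntegral ρ (gamCurve r) = A * c := by
      rw [curveLIntegral]
      have h4 : (fun s => ρ ((gamCurve r).toFun s) * ENNReal.ofReal ‖deriv (gamCurve r).toFun s‖)
          = fun s => ρ (gam r s) * c := by
        funext s
        have : (gamCurve r).toFun = gam r := rfl
        rw [this, norm_deriv_gam hrpos.le s]
      rw [h4]
      exact lintegral_mul_const' c _ hctop
    rwa [h3] at h2
  have hAc : c⁻¹ ≤ A := by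
    calc c⁻¹ = 1 * c⁻¹ := (one_mul _).symm
    _ ≤ (A * c) * c⁻¹ := mul_le_mul_left h1 _
    _ = A * (c * c⁻¹) := mul_assoc _ _ _
    _ = A := by rw [ENNReal.mul_inv_cancel hc0 hctop, mul_one]
  -- Cauchy-Schwarz
  have hmeas : AEMeasurable (fun s => ρ (gam r s)) (volume.restrict (Ioo (0:ℝ) 1)) :=
    (hadm.1.comp (gam_continuous r).measurable).aemeasurable
  have hCS : A ≤ B ^ ((1:ℝ)/2) := by
    have hconj : Real.HolderConjugate 2 2 := Real.HolderConjugate.two_two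
    have h5 := ENNReal.lintegral_mul_le_Lp_mul_Lq (volume.restrict (Ioo (0:ℝ) 1)) hconj
      hmeas aemeasurable_const (g := fun _ => (1 : ENNReal))
    simp only [Pi.mul_apply, mul_one, ENNReal.one_rpow] at h5
    have h6 : ∫⁻ s in Ioo (0:ℝ) 1, (1:ENNReal) = 1 := by
      simp [Real.volume_Ioo]
    rw [h6, ENNReal.one_rpow, mul_one] at h5
    have h7 : ∀ x : ENNReal, x ^ (2:ℝ) = x ^ (2:ℕ) := fun x => by
      rw [← ENNReal.rpow_natCast]; norm_num
    calc A ≤ (∫⁻ s in Ioo (0:ℝ) 1, ρ (gam r s) ^ (2:ℝ)) ^ ((1:ℝ)/2) := h5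
    _ = B ^ ((1:ℝ)/2) := by
        congr 1
        exact lintegral_congr fun s => h7 _
  have hA2 : c⁻¹ * c⁻¹ ≤ B := by
    have h8 : c⁻¹ ≤ B ^ ((1:ℝ)/2) := le_trans hAc hCS
    have h9 := ENNReal.rpow_le_rpow h8 (by norm_num : (0:ℝ) ≤ 2)
    have h10 : (B ^ ((1:ℝ)/2)) ^ (2:ℝ) = B := by
      rw [← ENNReal.rpow_mul]; norm_num
    have h11 : (c⁻¹) ^ (2:ℝ) = c⁻¹ * c⁻¹ := by
      rw [show ((2:ℝ)) = ((2:ℕ):ℝ) by norm_num, ENNReal.rpow_natCast]; ring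
    rw [h10, h11] at h9
    exact h9
  calc c⁻¹ = (c * c⁻¹) * c⁻¹ := by rw [ENNReal.mul_inv_cancel hc0 hctop, one_mul]
  _ = c * (c⁻¹ * c⁻¹) := by rw [mul_assoc]
  _ ≤ c * B := mul_le_mul_right hA2 _

/-! ### The planar change of variables -/

def Phi (p : ℝ × ℝ) : ℝ × ℝ := (1 + p.1 * Real.cos (th p.2), p.1 * Real.sin (th p.2))

def Bmat (p : ℝ × ℝ) : ℝ × ℝ →L[ℝ] ℝ × ℝ :=
  LinearMap.toContinuousLinearMap (Matrix.toLin (Module.Basis.finTwoProd ℝ) (Module.Basis.finTwoProd ℝ)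
    !![Real.cos (th p.2), -(3 * π / 2) * (p.1 * Real.sin (th p.2));
       Real.sin (th p.2), (3 * π / 2) * (p.1 * Real.cos (th p.2))])

lemma Bmat_det (p : ℝ × ℝ) : (Bmat p).det = 3 * π / 2 * p.1 := by
  simp only [Bmat, LinearMap.det_toContinuousLinearMap, LinearMap.det_toLin,
    Matrix.det_fin_two_of]
  linear_combination (3 * π / 2 * p.1) * Real.sin_sq_add_cos_sq (th p.2)

lemma hasFDerivAt_Phi (p : ℝ × ℝ) : HasFDerivAt Phi (Bmat p) p := by
  rw [Bmat, Matrix.toLin_finTwoProd_toContinuousLinearMap]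
  have h2 : HasFDerivAt (fun q : ℝ × ℝ => th q.2)
      ((3 * π / 2) • ContinuousLinearMap.snd ℝ ℝ ℝ) p := by
    have := (hasFDerivAt_snd (𝕜 := ℝ) (E := ℝ) (F := ℝ) (p := p)).const_mul (3 * π / 2)
    have h3 := this.const_add (π / 2)
    have heq : (fun q : ℝ × ℝ => th q.2) = fun q : ℝ × ℝ => π / 2 + 3 * π / 2 * q.2 := by
      funext q; simp [th]
    rw [heq]
    exact h3
  have hcos := (Real.hasDerivAt_cos (th p.2)).comp_hasFDerivAt p h2
  have hsin := (Real.hasDerivAt_sin (th p.2)).comp_hasFDerivAt p h2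
  have hx := (hasFDerivAt_fst (𝕜 := ℝ) (E := ℝ) (F := ℝ) (p := p)).mul hcos
  have hx1 := hx.const_add 1
  have hy := (hasFDerivAt_fst (𝕜 := ℝ) (E := ℝ) (F := ℝ) (p := p)).mul hsin
  have hPhi : Phi = fun q : ℝ × ℝ =>
      (1 + q.1 * Real.cos (th q.2), q.1 * Real.sin (th q.2)) := rfl
  rw [hPhi]
  refine (HasFDerivAt.prodMk hx1 hy).congr_fderiv ?_
  apply ContinuousLinearMap.ext
  intro v
  apply Prod.ext
  · simp [Function.comp, smul_smul]
    ring
  · simp [Function.comp, smul_smul]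
    ring

lemma Phi_injOn {ε : ℝ} (hε : 0 < ε) : InjOn Phi (Ioo ε 1 ×ˢ Ioo (0:ℝ) 1) := by
  rintro ⟨r₁, s₁⟩ hp ⟨r₂, s₂⟩ hq heq
  simp only [mem_prod, mem_Ioo] at hp hq
  have hr1 : 0 < r₁ := hε.trans hp.1.1
  have hr2 : 0 < r₂ := hε.trans hq.1.1
  simp only [Phi, Prod.mk.injEq] at heq
  have e1 : r₁ * Real.cos (th s₁) = r₂ * Real.cos (th s₂) := by linarith [heq.1]
  have e2 : r₁ * Real.sin (th s₁) = r₂ * Real.sin (th s₂) := heq.2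
  have hsq : r₁ ^ 2 = r₂ ^ 2 := by
    have k1 : r₁ ^ 2 = (r₁ * Real.sin (th s₁)) ^ 2 + (r₁ * Real.cos (th s₁)) ^ 2 := by
      linear_combination (r₁ ^ 2) * (Real.sin_sq_add_cos_sq (th s₁)).symm
    have k2 : r₂ ^ 2 = (r₂ * Real.sin (th s₂)) ^ 2 + (r₂ * Real.cos (th s₂)) ^ 2 := by
      linear_combination (r₂ ^ 2) * (Real.sin_sq_add_cos_sq (th s₂)).symm
    rw [k1, k2, e1, e2]
  have hrr : r₁ = r₂ := by
    have h1 : r₁ ≤ r₂ := by nlinarith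
    have h2 : r₂ ≤ r₁ := by nlinarith
    linarith
  subst hrr
  have ec : Real.cos (th s₁) = Real.cos (th s₂) := by
    exact mul_left_cancel₀ hr1.ne' e1
  have es : Real.sin (th s₁) = Real.sin (th s₂) := by
    exact mul_left_cancel₀ hr1.ne' e2
  have hexp : Complex.exp (((th s₁ : ℝ) : ℂ) * Complex.I)
      = Complex.exp (((th s₂ : ℝ) : ℂ) * Complex.I) := by
    apply Complex.ext
    · simpa [Complex.exp_ofReal_mul_I_re] using ec
    · simpa [Complex.exp_ofReal_mul_I_im] using es
  rw [Complex.exp_eq_exp_iff_exists_int] at hexp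
  obtain ⟨n, hn⟩ := hexp
  have him : th s₁ = th s₂ + n * (2 * π) := by
    have := congrArg Complex.im hn
    simpa using this
  have hb1 := th_lt s₁ ⟨hp.2.1, hp.2.2⟩
  have hb2 := th_lt s₂ ⟨hq.2.1, hq.2.2⟩
  have hnabs : |(n : ℝ)| < 1 := by
    rw [abs_lt]
    constructor <;> nlinarith [pi_pos, hb1.1, hb1.2, hb2.1, hb2.2]
  have hn0 : n = 0 := by
    rw [abs_lt] at hnabs
    have l1 : (-1 : ℤ) < n := by exact_mod_cast hnabs.1
    have l2 : n < (1 : ℤ) := by exact_mod_cast hnabs.2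
    omega
  have hth : th s₁ = th s₂ := by rw [him, hn0]; push_cast; ring
  have hss : s₁ = s₂ := by
    simp only [th] at hth
    have hπ : (0:ℝ) < π := pi_pos
    nlinarith
  rw [hss]

lemma plane_bound {ρ : ℂ → ENNReal} (hρ : Measurable ρ) {ε : ℝ} (hε : 0 < ε) :
    ∫⁻ r in Ioo ε 1, ENNReal.ofReal (3 * π / 2 * r) * ∫⁻ s in Ioo (0:ℝ) 1, ρ (gam r s) ^ 2
      ≤ ∫⁻ z : ℂ, ρ z ^ 2 := by
  set S : Set (ℝ × ℝ) := Ioo ε 1 ×ˢ Ioo (0:ℝ) 1 with hSdef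
  have hS : MeasurableSet S := measurableSet_Ioo.prod measurableSet_Ioo
  set G : ℝ × ℝ → ENNReal := fun q => ρ ((q.1 : ℂ) + (q.2 : ℂ) * Complex.I) ^ 2 with hGdef
  have hGmeas : Measurable G := by
    apply Measurable.pow_const
    apply hρ.comp
    exact Continuous.measurable (by continuity)
  set H : ℝ × ℝ → ENNReal :=
    fun p => ENNReal.ofReal (3 * π / 2 * p.1) * ρ (gam p.1 p.2) ^ 2 with hHdef
  have hgamc : Continuous (fun p : ℝ × ℝ => gam p.1 p.2) := by
    unfold gam th
    continuity
  have hHmeas : Measurable H := by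
    apply Measurable.mul
    · exact (measurable_fst.const_mul _).ennreal_ofReal
    · exact (hρ.comp hgamc.measurable).pow_const 2
  have hder : ∀ p ∈ S, HasFDerivWithinAt Phi (Bmat p) S p :=
    fun p _ => (hasFDerivAt_Phi p).hasFDerivWithinAt
  have hcv := lintegral_image_eq_lintegral_abs_det_fderiv_mul volume hS hder (Phi_injOn hε) G
  have hcong : ∫⁻ p in S, ENNReal.ofReal |(Bmat p).det| * G (Phi p) = ∫⁻ p in S, H p := by
    apply setLIntegral_congr_fun hS
    rintro ⟨r, s⟩ hp
    simp only [hSdef, mem_prod, mem_Ioo] at hp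
    have hrpos : 0 < r := hε.trans hp.1.1
    have h1 : |(Bmat (r, s)).det| = 3 * π / 2 * r := by
      rw [Bmat_det]
      exact abs_of_pos (by positivity)
    have h2 : G (Phi (r, s)) = ρ (gam r s) ^ 2 := by
      simp only [hGdef, Phi]
      congr 2
      apply Complex.ext
      · simp only [Complex.add_re, Complex.mul_re, Complex.I_re, Complex.I_im,
          Complex.ofReal_re, Complex.ofReal_im, gam_re]
        ring
      · simp only [Complex.add_im, Complex.mul_im, Complex.I_re, Complex.I_im,
          Complex.ofReal_re, Complex.ofReal_im, gam_im]
        ring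
    simp only [hHdef]
    rw [h1, h2]
  have tonelli : ∫⁻ p in S, H p = ∫⁻ r in Ioo ε 1, ∫⁻ s in Ioo (0:ℝ) 1, H (r, s) := by
    rw [hSdef, Measure.volume_eq_prod, ← Measure.prod_restrict]
    exact lintegral_prod _ hHmeas.aemeasurable
  have htotal : ∫⁻ q, G q = ∫⁻ z : ℂ, ρ z ^ 2 := by
    rw [← Complex.volume_preserving_equiv_real_prod.lintegral_comp hGmeas]
    apply lintegral_congr
    intro z
    simp only [hGdef, Complex.measurableEquivRealProd]
    norm_num [Complex.re_add_im]
  calc ∫⁻ r in Ioo ε 1, ENNReal.ofReal (3 * π / 2 * r) * ∫⁻ s in Ioo (0:ℝ) 1, ρ (gam r s) ^ 2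
      = ∫⁻ r in Ioo ε 1, ∫⁻ s in Ioo (0:ℝ) 1, H (r, s) := by
        apply lintegral_congr
        intro r
        simp only [hHdef]
        rw [lintegral_const_mul' _ _ ENNReal.ofReal_ne_top]
    _ = ∫⁻ p in S, H p := tonelli.symm
    _ = ∫⁻ p in S, ENNReal.ofReal |(Bmat p).det| * G (Phi p) := hcong.symm
    _ = ∫⁻ x in Phi '' S, G x := hcv.symm
    _ ≤ ∫⁻ q, G q := setLIntegral_le_lintegral _ _
    _ = ∫⁻ z : ℂ, ρ z ^ 2 := htotal

lemma log_lintegral {ε : ℝ} (hε : 0 < ε) (hε1 : ε < 1) :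
    ENNReal.ofReal (-Real.log ε) ≤ ∫⁻ r in Ioo ε 1, (ENNReal.ofReal r)⁻¹ := by
  have h1 : ∀ r ∈ Ioo ε 1, (ENNReal.ofReal r)⁻¹ = ENNReal.ofReal r⁻¹ :=
    fun r hr => (ENNReal.ofReal_inv_of_pos (hε.trans hr.1)).symm
  rw [setLIntegral_congr_fun measurableSet_Ioo h1]
  have hint : IntegrableOn (fun r : ℝ => r⁻¹) (Ioo ε 1) := by
    have : IntervalIntegrable (fun r : ℝ => r⁻¹) volume ε 1 := by
      apply intervalIntegral.intervalIntegrable_inv ?_ continuousOn_id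
      intro x hx
      rw [uIcc_of_le hε1.le] at hx
      exact ne_of_gt (lt_of_lt_of_le hε hx.1)
    have h2 := (intervalIntegrable_iff_integrableOn_Ioc_of_le hε1.le).mp this
    exact h2.mono_set Ioo_subset_Ioc_self
  have heq : ∫ r in Ioo ε 1, r⁻¹ = -Real.log ε := by
    rw [← integral_Ioc_eq_integral_Ioo, ← intervalIntegral.integral_of_le hε1.le,
      integral_inv (by rw [uIcc_of_le hε1.le]; intro h; exact absurd h.1 (not_le.2 hε) : (0:ℝ) ∉ uIcc ε 1)]
    rw [one_div, Real.log_inv]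
  have hpos : 0 ≤ᵐ[volume.restrict (Ioo ε 1)] fun r : ℝ => r⁻¹ := by
    rw [EventuallyLE, ae_restrict_iff' measurableSet_Ioo]
    exact ae_of_all _ fun r hr => inv_nonneg.2 (hε.trans hr.1).le
  rw [← heq, ofReal_integral_eq_lintegral_ofReal hint hpos]

lemma modulus_lower {ε : ℝ} (hε : 0 < ε) (hε1 : ε < 1) :
    ENNReal.ofReal (3 * π / 2)⁻¹ * ENNReal.ofReal (-Real.log ε)
      ≤ modulus (chimFam ε chimI0 chimJ0) := by
  rw [modulus]
  refine le_iInf fun ρ => le_iInf fun hadm => ?_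
  have step1 : ∀ r ∈ Ioo ε 1,
      ENNReal.ofReal (3 * π / 2)⁻¹ * (ENNReal.ofReal r)⁻¹
        ≤ ENNReal.ofReal (3 * π / 2 * r) * ∫⁻ s in Ioo (0:ℝ) 1, ρ (gam r s) ^ 2 := by
    intro r hr
    refine le_trans (le_of_eq ?_) (curve_bound hadm hε hr)
    have hrpos : 0 < r := hε.trans hr.1
    rw [ENNReal.ofReal_mul (by positivity), ENNReal.mul_inv
      (Or.inl (by simp [ENNReal.ofReal_eq_zero]; positivity)) (Or.inl ENNReal.ofReal_ne_top),
      ENNReal.ofReal_inv_of_pos (by positivity)]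
  calc ENNReal.ofReal (3 * π / 2)⁻¹ * ENNReal.ofReal (-Real.log ε)
      ≤ ENNReal.ofReal (3 * π / 2)⁻¹ * ∫⁻ r in Ioo ε 1, (ENNReal.ofReal r)⁻¹ :=
        mul_le_mul_right (log_lintegral hε hε1) _
    _ = ∫⁻ r in Ioo ε 1, ENNReal.ofReal (3 * π / 2)⁻¹ * (ENNReal.ofReal r)⁻¹ :=
        (lintegral_const_mul' _ _ ENNReal.ofReal_ne_top).symm
    _ ≤ ∫⁻ r in Ioo ε 1,
          ENNReal.ofReal (3 * π / 2 * r) * ∫⁻ s in Ioo (0:ℝ) 1, ρ (gam r s) ^ 2 :=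
        setLIntegral_mono' measurableSet_Ioo step1
    _ ≤ ∫⁻ z : ℂ, ρ z ^ 2 := plane_bound hadm.1 hε

end ChimAux

/-- In the chimney domain, `mod Γᵋ_{I₀,J₀} → ∞` as `ε → 0⁺`. -/
theorem chimney_standard_modulus_tendsto_top :
    Filter.Tendsto (fun ε : ℝ => modulus (chimFam ε chimI0 chimJ0))
      (nhdsWithin 0 (Set.Ioi 0)) (nhds ⊤) := by
  apply tendsto_nhds_top_mono
    (f := fun ε : ℝ => ENNReal.ofReal (3 * Real.pi / 2)⁻¹ * ENNReal.ofReal (-Real.log ε))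
  · have h1 : Filter.Tendsto (fun ε : ℝ => -Real.log ε) (nhdsWithin 0 (Set.Ioi 0)) Filter.atTop :=
      Filter.tendsto_neg_atBot_atTop.comp Real.tendsto_log_nhdsGT_zero
    have h2 : Filter.Tendsto (fun ε : ℝ => ENNReal.ofReal (-Real.log ε))
        (nhdsWithin 0 (Set.Ioi 0)) (nhds ⊤) := ENNReal.tendsto_ofReal_atTop.comp h1
    have h3 := ENNReal.Tendsto.const_mul (a := ENNReal.ofReal (3 * Real.pi / 2)⁻¹) h2
      (Or.inl (by simp))
    rwa [ENNReal.mul_top (by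
      simp only [ne_eq, ENNReal.ofReal_eq_zero, not_le]
      have := Real.pi_pos
      positivity)] at h3
  · filter_upwards [Ioo_mem_nhdsGT_of_mem (Set.left_mem_Ico.2 one_pos)] with ε hε
    exact ChimAux.modulus_lower hε.1 hε.2

end
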